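/- Let s : ℕ → ℝ satisfy s(0)=0, s(1)=1, and s(n+1) = (1/(n+1)) · Σ_{k=1}^{n+1} max{ s(n), 1 + s(n+1-k) } for n ≥ 1. Then s is strictly increasing on the positive integers: s(n) < s(n+1) for all n ≥ 1. -/

import Mathlib

open Finset

theorem stmt_1 (s : ℕ → ℝ) (h0 : s 0 = 0) (h1 : s 1 = 1)
    (hrec : ∀ n : ℕ, 1 ≤ n →
      s (n + 1) = (1 / ((n : ℝ) + 1)) *
        ∑ k ∈ Finset.Icc 1 (n + 1), max (s n) (1 + s (n + 1 - k))) :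
    ∀ n : ℕ, 1 ≤ n → s n < s (n + 1) := by
  intro n hn
  have hpos : (0 : ℝ) < (n : ℝ) + 1 := by positivity
  have hbound : ∀ k ∈ Icc 1 (n + 1),
      s n + (if k = 1 then (1 : ℝ) else 0) ≤ max (s n) (1 + s (n + 1 - k)) := by
    intro k hk
    split_ifs with h
    · subst h
      have : 1 + s (n + 1 - 1) ≤ max (s n) (1 + s (n + 1 - 1)) := le_max_right _ _
      simpa [add_comm] using this
    · simpa using le_max_left (s n) (1 + s (n + 1 - k))
  have hsum := Finset.sum_le_sum hbound
  have hcard : (Icc 1 (n + 1)).card = n + 1 := by simp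
  have hsum1 : ∑ k ∈ Icc 1 (n + 1), (s n + (if k = 1 then (1 : ℝ) else 0))
      = ((n : ℝ) + 1) * s n + 1 := by
    rw [Finset.sum_add_distrib, Finset.sum_const, hcard]
    have : ∑ k ∈ Icc 1 (n + 1), (if k = 1 then (1 : ℝ) else 0) = 1 := by
      rw [Finset.sum_ite_eq' (Icc 1 (n + 1)) 1 (fun _ => (1 : ℝ))]
      simp
    rw [this]
    push_cast
    ring
  have hkey : ((n : ℝ) + 1) * s n + 1 ≤ ∑ k ∈ Icc 1 (n + 1), max (s n) (1 + s (n + 1 - k)) := by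
    rw [← hsum1]; exact hsum
  have := hrec n hn
  rw [this]
  rw [div_mul_eq_mul_div, one_mul, lt_div_iff₀ hpos]
  calc s n * ((n : ℝ) + 1) < ((n : ℝ) + 1) * s n + 1 := by ring_nf; linarith
    _ ≤ _ := hkey
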